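/- arXiv:2106.14486 — 9 statements merged into one kernel-verified Lean document; each statement's English description precedes it below -/
import Mathlib

section
/- Let u_k : ℝ_+^m → ℝ (k = 1,…,K) be monotone, continuous, locally non-satiated utility functions and β_k ∈ ℝ_+^m consumption bundles. Suppose there exists a monotone, continuous, locally non-satiated function g : ℝ_+^m → ℝ and positive scalars γ_1,…,γ_K such that for every k, β_k maximizes u_k(β) over {β : g(β) ≤ γ_k} and g(β_k) = γ_k. Then the dataset satisfies GARP with constraint functions g_k(β) = u_k(β_k) − u_k(β): that is, whenever there exist indices i_1,…,i_L with u_k(β_{i_1}) ≥ u_k(β_k), u_{i_1}(β_{i_2}) ≥ u_{i_1}(β_{i_1}), …, u_{i_L}(β_j) ≥ u_{i_L}(β_{i_L}), it follows that u_j(β_k) ≤ u_j(β_j). -/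
/-- The nonnegative orthant `ℝ_+^m`. -/
def Rplus (m : ℕ) : Set (Fin m → ℝ) := {x | ∀ i, 0 ≤ x i}

/-- Monotone on `ℝ_+^m` with respect to the componentwise order. -/
def MonoOnRplus (m : ℕ) (f : (Fin m → ℝ) → ℝ) : Prop :=
  ∀ x ∈ Rplus m, ∀ y ∈ Rplus m, x ≤ y → f x ≤ f y

/-- Locally non-satiated on `ℝ_+^m`. -/
def LNS (m : ℕ) (f : (Fin m → ℝ) → ℝ) : Prop :=
  ∀ x ∈ Rplus m, ∀ ε > (0 : ℝ), ∃ x' ∈ Rplus m, ‖x' - x‖ < ε ∧ f x < f x'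

theorem stmt1 (m K : ℕ) (u : Fin K → (Fin m → ℝ) → ℝ) (β : Fin K → (Fin m → ℝ))
    (hβ : ∀ k, β k ∈ Rplus m)
    (hmono : ∀ k, MonoOnRplus m (u k))
    (hcont : ∀ k, ContinuousOn (u k) (Rplus m))
    (hlns : ∀ k, LNS m (u k))
    (g : (Fin m → ℝ) → ℝ) (γ : Fin K → ℝ)
    (hgmono : MonoOnRplus m g) (hgcont : ContinuousOn g (Rplus m)) (hglns : LNS m g)
    (hγpos : ∀ k, 0 < γ k)
    (hbind : ∀ k, g (β k) = γ k)
    (hmax : ∀ k, ∀ b ∈ Rplus m, g b ≤ γ k → u k b ≤ u k (β k)) :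
    -- GARP with constraint functions `g_k(β) = u_k(β_k) − u_k(β)`:
    ∀ k j : Fin K, k ≠ j →
      (∃ (L : ℕ) (i : Fin (L + 1) → Fin K),
        u k (β k) ≤ u k (β (i 0)) ∧
        (∀ l : Fin L, u (i l.castSucc) (β (i l.castSucc)) ≤ u (i l.castSucc) (β (i l.succ))) ∧
        u (i (Fin.last L)) (β (i (Fin.last L))) ≤ u (i (Fin.last L)) (β j)) →
      u j (β k) ≤ u j (β j) := by
  -- Key lemma: if `b` is (weakly) preferred to `β k` by `u k`, then `g b ≥ γ k`.
  have key : ∀ k : Fin K, ∀ b ∈ Rplus m, u k (β k) ≤ u k b → γ k ≤ g b := by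
    intro k b hb hub
    by_contra hlt
    push_neg at hlt
    have hcw : ContinuousWithinAt g (Rplus m) b := hgcont b hb
    have hev : ∀ᶠ x in nhdsWithin b (Rplus m), g x < γ k :=
      hcw (Iio_mem_nhds hlt)
    rw [Filter.eventually_iff, Metric.mem_nhdsWithin_iff] at hev
    obtain ⟨ε, hε, hball⟩ := hev
    obtain ⟨b', hb', hdist, hub'⟩ := hlns k b hb ε hε
    have hgb' : g b' < γ k :=
      hball ⟨by simpa [Metric.mem_ball, dist_eq_norm] using hdist, hb'⟩
    have := hmax k b' hb' hgb'.le
    linarith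
  intro k j _ ⟨L, i, h0, hchain, hlast⟩
  have hγchain : ∀ l : Fin (L + 1), γ k ≤ γ (i l) := by
    intro l
    induction l using Fin.induction with
    | zero =>
      have := key k (β (i 0)) (hβ _) h0
      rwa [hbind] at this
    | succ l ih =>
      have := key (i l.castSucc) (β (i l.succ)) (hβ _) (hchain l)
      rw [hbind] at this
      exact le_trans ih this
  have hγj : γ k ≤ γ j := by
    have := key (i (Fin.last L)) (β j) (hβ _) hlast
    rw [hbind] at this
    exact le_trans (hγchain (Fin.last L)) this
  exact hmax j (β k) (hβ k) (by rw [hbind]; exact hγj)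
end

section
/- Let u_k : ℝ_+^m → ℝ (k = 1,…,K) be monotone, continuous, locally non-satiated utility functions and β_k ∈ ℝ_+^m consumption bundles. If the dataset satisfies GARP with constraint functions g_k(β) = u_k(β_k) − u_k(β), then there exist positive scalars ḡ_1,…,ḡ_K and λ_1,…,λ_K such that ḡ_s − ḡ_t − λ_t (u_t(β_s) − u_t(β_t)) ≥ 0 for all s, t ∈ {1,…,K}. -/
lemma chain_of_transGen {K : ℕ} (A : Fin K → Fin K → ℝ) (hA0 : ∀ t, A t t = 0) {k j : Fin K}
    (h : Relation.TransGen (fun a b => 0 ≤ A a b) k j) :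
    ∃ (L : ℕ) (i : Fin (L + 1) → Fin K),
      0 ≤ A k (i 0) ∧ (∀ l : Fin L, 0 ≤ A (i l.castSucc) (i l.succ)) ∧
      0 ≤ A (i (Fin.last L)) j := by
  induction h with
  | single hr => exact ⟨0, fun _ => k, le_of_eq (hA0 k).symm, fun l => l.elim0, hr⟩
  | @tail b c hkb hbc ih =>
    obtain ⟨L, i, h0, hm, hl⟩ := ih
    refine ⟨L + 1, Fin.snoc i b, ?_, ?_, ?_⟩
    · have : (Fin.snoc i b : Fin (L + 2) → Fin K) 0 = i 0 := by
        rw [← Fin.castSucc_zero, Fin.snoc_castSucc]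
      rw [this]; exact h0
    · intro l
      refine Fin.lastCases ?_ ?_ l
      · rw [Fin.snoc_castSucc, Fin.succ_last, Fin.snoc_last]; exact hl
      · intro m
        rw [Fin.snoc_castSucc, Fin.succ_castSucc, Fin.snoc_castSucc]
        exact hm m
    · rw [Fin.snoc_last]; exact hbc

theorem stmt2 (m K : ℕ) (u : Fin K → (Fin m → ℝ) → ℝ) (β : Fin K → (Fin m → ℝ))
    (hβ : ∀ k, β k ∈ Rplus m)
    (hmono : ∀ k, MonoOnRplus m (u k))
    (hcont : ∀ k, ContinuousOn (u k) (Rplus m))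
    (hlns : ∀ k, LNS m (u k))
    -- GARP with constraint functions `g_k(β) = u_k(β_k) − u_k(β)`:
    (hGARP : ∀ k j : Fin K, k ≠ j →
      (∃ (L : ℕ) (i : Fin (L + 1) → Fin K),
        u k (β k) ≤ u k (β (i 0)) ∧
        (∀ l : Fin L, u (i l.castSucc) (β (i l.castSucc)) ≤ u (i l.castSucc) (β (i l.succ))) ∧
        u (i (Fin.last L)) (β (i (Fin.last L))) ≤ u (i (Fin.last L)) (β j)) →
      u j (β k) ≤ u j (β j)) :
    ∃ gbar lam : Fin K → ℝ, (∀ k, 0 < gbar k) ∧ (∀ k, 0 < lam k) ∧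
      ∀ s t, gbar s - gbar t - lam t * (u t (β s) - u t (β t)) ≥ 0 := by
  classical
  rcases Nat.eq_zero_or_pos K with hK | hK
  · subst hK
    exact ⟨fun _ => 1, fun _ => 1, fun k => k.elim0, fun k => k.elim0, fun s => s.elim0⟩
  haveI : NeZero K := ⟨by omega⟩
  set A : Fin K → Fin K → ℝ := fun t s => u t (β s) - u t (β t) with hAdef
  have hA0 : ∀ t, A t t = 0 := fun t => sub_self _
  set R : Fin K → Fin K → Prop := fun a b => 0 ≤ A a b with hRdef
  -- key consequence of GARP
  have key : ∀ k j, Relation.TransGen R k j → A j k ≤ 0 := by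
    intro k j h
    by_cases hkj : k = j
    · subst hkj; exact le_of_eq (hA0 k)
    · obtain ⟨L, i, h0, hm, hl⟩ := chain_of_transGen A hA0 h
      refine sub_nonpos.mpr (hGARP k j hkj ⟨L, i, sub_nonneg.mp h0,
        fun l => sub_nonneg.mp (hm l), sub_nonneg.mp hl⟩)
  -- rank function
  set N : Fin K → ℕ :=
    fun t => (Finset.univ.filter (fun j => Relation.ReflTransGen R t j)).card with hNdef
  have hNle : ∀ t s, Relation.ReflTransGen R t s → N s ≤ N t := by
    intro t s h
    apply Finset.card_le_card
    intro j hj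
    simp only [Finset.mem_filter, Finset.mem_univ, true_and] at hj ⊢
    exact h.trans hj
  have hN1 : ∀ t, 1 ≤ N t := by
    intro t
    have : t ∈ Finset.univ.filter (fun j => Relation.ReflTransGen R t j) := by
      simp [Relation.ReflTransGen.refl]
    exact Finset.card_pos.mpr ⟨t, this⟩
  have hNK : ∀ t, N t ≤ K := by
    intro t
    calc N t ≤ Finset.univ.card := Finset.card_filter_le _ _
    _ = K := by simp
  have hNlt : ∀ t s, Relation.ReflTransGen R t s → ¬ Relation.ReflTransGen R s t → N s < N t := by
    intro t s hts hst
    apply Finset.card_lt_card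
    constructor
    · intro j hj
      simp only [Finset.mem_filter, Finset.mem_univ, true_and] at hj ⊢
      exact hts.trans hj
    · intro hsub
      have : t ∈ Finset.univ.filter (fun j => Relation.ReflTransGen R t j) := by
        simp [Relation.ReflTransGen.refl]
      have := hsub this
      simp only [Finset.mem_filter, Finset.mem_univ, true_and] at this
      exact hst this
  -- constants
  set Amax : ℝ := 1 + ∑ t, ∑ s, |A t s| with hAmaxdef
  have hAle : ∀ t s, A t s ≤ Amax := by
    intro t s
    have h1 : |A t s| ≤ ∑ s', |A t s'| :=
      Finset.single_le_sum (f := fun s' => |A t s'|) (fun i _ => abs_nonneg _) (Finset.mem_univ s)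
    have h2 : (∑ s', |A t s'|) ≤ ∑ t', ∑ s', |A t' s'| :=
      Finset.single_le_sum (f := fun t' => ∑ s', |A t' s'|)
        (fun i _ => Finset.sum_nonneg fun _ _ => abs_nonneg _) (Finset.mem_univ t)
    have := le_abs_self (A t s)
    simp only [hAmaxdef]
    linarith
  haveI : Nonempty (Fin K × Fin K) := ⟨(⟨0, hK⟩, ⟨0, hK⟩)⟩
  set f : Fin K × Fin K → ℝ := fun p => if A p.1 p.2 < 0 then -A p.1 p.2 else 1 with hfdef
  set δ : ℝ := Finset.univ.inf' Finset.univ_nonempty f with hδdef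
  have hδpos : 0 < δ := by
    rw [hδdef, Finset.lt_inf'_iff]
    intro p _
    simp only [hfdef]
    split
    · linarith [show A p.1 p.2 < 0 by assumption]
    · exact one_pos
  have hδle : ∀ t s, A t s < 0 → δ ≤ -A t s := by
    intro t s h
    have := Finset.inf'_le f (Finset.mem_univ (t, s))
    rw [← hδdef] at this
    simpa [hfdef, if_pos h] using this
  have hAmaxpos : 0 < Amax := by
    have : (0:ℝ) ≤ ∑ t, ∑ s, |A t s| :=
      Finset.sum_nonneg fun _ _ => Finset.sum_nonneg fun _ _ => abs_nonneg _
    simp only [hAmaxdef]; linarith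
  set C : ℝ := 2 + Amax * δ⁻¹ with hCdef
  have hC1 : 1 < C := by
    have : 0 < Amax * δ⁻¹ := mul_pos hAmaxpos (inv_pos.mpr hδpos)
    simp only [hCdef]; linarith
  set gbar : Fin K → ℝ := fun t => C ^ (K - N t) with hgdef
  set lam : Fin K → ℝ := fun t => gbar t * δ⁻¹ with hlamdef
  have hgpos : ∀ t, 0 < gbar t := fun t => pow_pos (by linarith) _
  have hlampos : ∀ t, 0 < lam t := fun t => mul_pos (hgpos t) (inv_pos.mpr hδpos)
  have hinv : δ * δ⁻¹ = 1 := mul_inv_cancel₀ (ne_of_gt hδpos)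
  clear_value lam gbar C δ f Amax N R A
  refine ⟨gbar, lam, hgpos, hlampos, ?_⟩
  intro s t
  have hAts : u t (β s) - u t (β t) = A t s := by rw [hAdef]
  rw [hAts]
  rcases lt_trichotomy (A t s) 0 with hlt | heq | hgt
  · -- A t s < 0
    have h1 : A t s ≤ -δ := by linarith [hδle t s hlt]
    have h2 : lam t * A t s ≤ lam t * (-δ) :=
      mul_le_mul_of_nonneg_left h1 (le_of_lt (hlampos t))
    have h3 : lam t * (-δ) = -gbar t := by
      simp only [hlamdef]
      field_simp
    nlinarith [hgpos s, hgpos t]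
  · -- A t s = 0
    have hRts : Relation.ReflTransGen R t s :=
      Relation.ReflTransGen.single (by simp only [hRdef]; exact le_of_eq heq.symm)
    have hle : N s ≤ N t := hNle t s hRts
    have hpow : gbar t ≤ gbar s := by
      simp only [hgdef]
      exact pow_le_pow_right₀ (le_of_lt hC1) (by omega)
    rw [heq]
    linarith
  · -- A t s > 0
    have hRts : Relation.ReflTransGen R t s :=
      Relation.ReflTransGen.single (by simp only [hRdef]; exact le_of_lt hgt)
    have hnst : ¬ Relation.ReflTransGen R s t := by
      intro hst
      rcases Relation.reflTransGen_iff_eq_or_transGen.mp hst with h | h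
      · subst h; exact absurd (hA0 t) (by linarith)
      · exact absurd (key s t h) (by linarith)
    have hlt' : N s < N t := hNlt t s hRts hnst
    have hexp : K - N t + 1 ≤ K - N s := by
      have := hNK t; have := hN1 s; omega
    have hpow : C ^ (K - N t + 1) ≤ gbar s := by
      simp only [hgdef]
      exact pow_le_pow_right₀ (le_of_lt hC1) hexp
    have hCg : gbar t * C ≤ gbar s := by
      rw [pow_succ] at hpow
      simpa [hgdef] using hpow
    have h1 : lam t * A t s ≤ lam t * Amax :=
      mul_le_mul_of_nonneg_left (hAle t s) (le_of_lt (hlampos t))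
    have h2 : lam t * Amax = gbar t * (Amax * δ⁻¹) := by
      simp only [hlamdef]; ring
    have h3 : gbar t * C = gbar t * 2 + gbar t * (Amax * δ⁻¹) := by
      simp only [hCdef]; ring
    have h4 : lam t * A t s ≤ gbar t * (Amax * δ⁻¹) := by rw [← h2]; exact h1
    nlinarith [hgpos t, hCg, h3, h4]
end

section
/- Let u_k : ℝ_+^m → ℝ (k = 1,…,K) be functions and β_k ∈ ℝ_+^m bundles, and suppose positive scalars ḡ_k, λ_k (k = 1,…,K) satisfy ḡ_s − ḡ_t − λ_t (u_t(β_s) − u_t(β_t)) ≥ 0 for all s, t. Define g(β) = max_{k ∈ {1,…,K}} { ḡ_k + λ_k (u_k(β) − u_k(β_k)) }. Then g(β_k) = ḡ_k for every k, and for every k and every β ∈ ℝ_+^m with g(β) ≤ ḡ_k one has u_k(β) ≤ u_k(β_k); that is, β_k maximizes u_k over the budget set {β : g(β) ≤ ḡ_k}. -/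
theorem stmt3 (m K : ℕ) (hK : 0 < K)
    (u : Fin K → (Fin m → ℝ) → ℝ) (β : Fin K → (Fin m → ℝ))
    (hβ : ∀ k, β k ∈ Rplus m)
    (gbar lam : Fin K → ℝ) (hgpos : ∀ k, 0 < gbar k) (hlpos : ∀ k, 0 < lam k)
    (hineq : ∀ s t, gbar s - gbar t - lam t * (u t (β s) - u t (β t)) ≥ 0)
    (g : (Fin m → ℝ) → ℝ)
    (hgdef : ∀ b, g b = Finset.univ.sup' (Finset.univ_nonempty_iff.mpr ⟨⟨0, hK⟩⟩)
        (fun k => gbar k + lam k * (u k b - u k (β k)))) :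
    (∀ k, g (β k) = gbar k) ∧
    (∀ k, ∀ b ∈ Rplus m, g b ≤ gbar k → u k b ≤ u k (β k)) := by
  constructor
  · intro k
    rw [hgdef]
    apply le_antisymm
    · apply Finset.sup'_le
      intro t _
      have := hineq k t
      linarith
    · apply Finset.le_sup' (f := fun t => gbar t + lam t * (u t (β k) - u t (β t))) (b := k)
        (Finset.mem_univ k) |>.trans_eq' ?_
      simp
  · intro k b _ hgb
    have h := Finset.le_sup' (f := fun t => gbar t + lam t * (u t b - u t (β t))) (Finset.mem_univ k)
    rw [← hgdef] at h
    have hl := hlpos k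
    nlinarith
end

section
/- Consider finite sets X, A, Y, a prior pmf μ on X, utilities U_k : X × A → ℝ and attention strategies α_k (k = 1,…,K). Suppose positive scalars c_k, λ_k satisfy the BRP inequalities c_j − c_k − λ_k (J(α_j, U_k) − J(α_k, U_k)) ≥ 0 for all j, k. Define C(α) = max_{k ∈ {1,…,K}} { c_k + λ_k (J(α, U_k) − J(α_k, U_k)) }. Then C(α_k) = c_k for every k, and for every k, α_k maximizes λ_k J(α, U_k) − C(α) over all attention strategies α. -/
open Finset

/-- A probability mass function on a finite set. -/
def IsPmf {X : Type*} [Fintype X] (μ : X → ℝ) : Prop :=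
  (∀ x, 0 ≤ μ x) ∧ ∑ x, μ x = 1

/-- An attention strategy: for each state `x`, a pmf `α x : Y → ℝ` on observations. -/
def IsAttn {X Y : Type*} [Fintype Y] (α : X → Y → ℝ) : Prop :=
  (∀ x y, 0 ≤ α x y) ∧ ∀ x, ∑ y, α x y = 1

/-- Expected utility `J(α, U) = Σ_y max_a Σ_x μ(x) α(y|x) U(x,a)` of attention strategy `α`. -/
noncomputable def Jval {X A Y : Type*} [Fintype X] [Fintype A] [Fintype Y] [Nonempty A]
    (μ : X → ℝ) (α : X → Y → ℝ) (U : X → A → ℝ) : ℝ :=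
  ∑ y, Finset.univ.sup' Finset.univ_nonempty (fun a => ∑ x, μ x * α x y * U x a)

/-- A row-stochastic `|Y| × |Y|` matrix. -/
def RowStoch {Y : Type*} [Fintype Y] (Q : Y → Y → ℝ) : Prop :=
  (∀ y y', 0 ≤ Q y y') ∧ ∀ y, ∑ y', Q y y' = 1

/-- Blackwell order: `α ≥_B α̂` iff `α̂ = α Q` for some row-stochastic matrix `Q`. -/
def BlackwellGE {X Y : Type*} [Fintype Y] (α αhat : X → Y → ℝ) : Prop :=
  ∃ Q : Y → Y → ℝ, RowStoch Q ∧ ∀ x y, αhat x y = ∑ y', α x y' * Q y' y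

theorem stmt6 {X A Y : Type*} [Fintype X] [Fintype A] [Fintype Y] [Nonempty A]
    (K : ℕ) (hK : 0 < K) (μ : X → ℝ) (hμ : IsPmf μ)
    (U : Fin K → X → A → ℝ) (α : Fin K → X → Y → ℝ) (hα : ∀ k, IsAttn (α k))
    (c lam : Fin K → ℝ) (hc : ∀ k, 0 < c k) (hlam : ∀ k, 0 < lam k)
    (hBRP : ∀ j k : Fin K,
      c j - c k - lam k * (Jval μ (α j) (U k) - Jval μ (α k) (U k)) ≥ 0)
    (C : (X → Y → ℝ) → ℝ)
    (hCdef : ∀ a : X → Y → ℝ,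
      C a = Finset.univ.sup' (Finset.univ_nonempty_iff.mpr ⟨⟨0, hK⟩⟩)
        (fun k => c k + lam k * (Jval μ a (U k) - Jval μ (α k) (U k)))) :
    (∀ k, C (α k) = c k) ∧
    (∀ k, ∀ a : X → Y → ℝ, IsAttn a →
      lam k * Jval μ a (U k) - C a ≤ lam k * Jval μ (α k) (U k) - C (α k)) := by
  have hCeq : ∀ k, C (α k) = c k := by
    intro k
    rw [hCdef]
    apply le_antisymm
    · apply Finset.sup'_le
      intro j _
      have := hBRP k j
      linarith
    · have h := Finset.le_sup' (fun j => c j + lam j * (Jval μ (α k) (U j) - Jval μ (α j) (U j))) (Finset.mem_univ k)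
      simp at h
      exact h
  refine ⟨hCeq, fun k a _ => ?_⟩
  have hCa : c k + lam k * (Jval μ a (U k) - Jval μ (α k) (U k)) ≤ C a := by
    rw [hCdef]
    exact Finset.le_sup' (fun j => c j + lam j * (Jval μ a (U j) - Jval μ (α j) (U j))) (Finset.mem_univ k)
  rw [hCeq k]
  linarith
end

section
/- Consider finite sets X, A, Y, a prior pmf μ on X, utilities U_k : X × A → ℝ and attention strategies α_k (k = 1,…,K). Suppose the NIAC cyclical monotonicity condition holds: for every sequence of indices k_1, …, k_m ∈ {1,…,K} (with k_{m+1} := k_1), Σ_{i=1}^{m} ( J(α_{k_i}, U_{k_i}) − J(α_{k_{i+1}}, U_{k_i}) ) ≥ 0. Then there exist real scalars c_1,…,c_K such that J(α_k, U_k) − c_k ≥ J(α_j, U_k) − c_j for all j, k ∈ {1,…,K}; i.e., the BRP inequalities are feasible with all multipliers λ_k = 1. -/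
open Finset

section Aux

variable {n : ℕ}

/-- Cost of a path `q 0 → q 1 → ⋯ → q L` with edge costs `v`. -/
noncomputable def pcost (v : Fin n → Fin n → ℝ) (q : ℕ → Fin n) (L : ℕ) : ℝ :=
  ∑ i ∈ Finset.range L, v (q i) (q (i + 1))

lemma cyc_nonneg (v : Fin n → Fin n → ℝ)
    (hcyc : ∀ m : ℕ, 0 < m → ∀ ks : ℕ → Fin n,
      0 ≤ ∑ i ∈ Finset.range m, v (ks i) (ks ((i + 1) % m)))
    (q : ℕ → Fin n) (i j : ℕ) (hij : i < j) (hq : q i = q j) :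
    0 ≤ ∑ l ∈ Finset.range (j - i), v (q (i + l)) (q (i + l + 1)) := by
  set m := j - i with hm
  have hm0 : 0 < m := by omega
  have h := hcyc m hm0 (fun l => q (i + l % m))
  refine h.trans_eq (Finset.sum_congr rfl fun l hl => ?_)
  rw [Finset.mem_range] at hl
  have h1 : l % m = l := Nat.mod_eq_of_lt hl
  by_cases h2 : l + 1 < m
  · have ha : i + l % m = i + l := by rw [h1]
    have hb : i + (l + 1) % m % m = i + l + 1 := by
      rw [Nat.mod_eq_of_lt h2, Nat.mod_eq_of_lt h2]; omega
    exact congrArg₂ v (congrArg q ha) (congrArg q hb)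
  · have h3 : (l + 1) % m = 0 := by rw [show l + 1 = m from by omega, Nat.mod_self]
    have ha : i + l % m = i + l := by rw [h1]
    have hb : i + (l + 1) % m % m = i := by rw [h3, Nat.zero_mod, Nat.add_zero]
    exact congrArg₂ v (congrArg q ha)
      ((congrArg q hb).trans (hq.trans (congrArg q (by omega))))

lemma splice_cost (v : Fin n → Fin n → ℝ) (q : ℕ → Fin n) (i j L : ℕ)
    (hij : i < j) (hjL : j ≤ L) (hq : q i = q j) :
    pcost v (fun t => if t ≤ i then q t else q (t + (j - i))) (L - (j - i))
      + ∑ l ∈ Finset.range (j - i), v (q (i + l)) (q (i + l + 1)) = pcost v q L := by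
  set m := j - i with hmdef
  have e1 : pcost v q L
      = ∑ t ∈ Finset.range i, v (q t) (q (t + 1))
        + (∑ l ∈ Finset.range m, v (q (i + l)) (q (i + l + 1))
          + ∑ s ∈ Finset.range (L - j), v (q (j + s)) (q (j + s + 1))) := by
    have hr : Finset.range L = Finset.range (i + m + (L - j)) := by
      rw [show i + m + (L - j) = L from by omega]
    rw [pcost, hr, Finset.sum_range_add, Finset.sum_range_add, add_assoc]
    congr 1
    congr 1
    exact Finset.sum_congr rfl fun s _ =>
      congrArg₂ v (congrArg q (by omega)) (congrArg q (by omega))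
  have e2 : pcost v (fun t => if t ≤ i then q t else q (t + m)) (L - m)
      = ∑ t ∈ Finset.range i, v (q t) (q (t + 1))
        + ∑ s ∈ Finset.range (L - j), v (q (j + s)) (q (j + s + 1)) := by
    have hr : Finset.range (L - m) = Finset.range (i + (L - j)) := by
      rw [show i + (L - j) = L - m from by omega]
    rw [pcost, hr, Finset.sum_range_add]
    congr 1
    · refine Finset.sum_congr rfl fun t ht => ?_
      rw [Finset.mem_range] at ht
      rw [if_pos (by omega : t ≤ i), if_pos (by omega : t + 1 ≤ i)]
    · refine Finset.sum_congr rfl fun s hs => ?_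
      rw [Finset.mem_range] at hs
      by_cases h0 : s = 0
      · subst h0
        rw [if_pos (by omega : i + 0 ≤ i), if_neg (by omega : ¬ i + 0 + 1 ≤ i)]
        exact congrArg₂ v (hq.trans (congrArg q (by omega))) (congrArg q (by omega))
      · rw [if_neg (by omega : ¬ i + s ≤ i), if_neg (by omega : ¬ i + s + 1 ≤ i)]
        exact congrArg₂ v (congrArg q (by omega)) (congrArg q (by omega))
  rw [e1, e2]
  ring

/-- Any path can be replaced by one of length at most `n` with the same endpoints and
no larger cost, by removing (nonnegative) cycles. -/
lemma shorten (v : Fin n → Fin n → ℝ)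
    (hcyc : ∀ m : ℕ, 0 < m → ∀ ks : ℕ → Fin n,
      0 ≤ ∑ i ∈ Finset.range m, v (ks i) (ks ((i + 1) % m))) :
    ∀ (L : ℕ) (q : ℕ → Fin n), ∃ (L' : ℕ) (q' : ℕ → Fin n), L' ≤ n ∧ q' 0 = q 0 ∧
      q' L' = q L ∧ pcost v q' L' ≤ pcost v q L := by
  intro L
  induction L using Nat.strong_induction_on with
  | _ L ih =>
    intro q
    by_cases hL : L ≤ n
    · exact ⟨L, q, hL, rfl, rfl, le_rfl⟩
    · push_neg at hL
      obtain ⟨x, y, hxy, hqxy⟩ := Fintype.exists_ne_map_eq_of_card_lt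
        (fun t : Fin (L + 1) => q t) (by simp; omega)
      have key : ∀ i j : ℕ, i < j → j ≤ L → q i = q j →
          ∃ (L' : ℕ) (q' : ℕ → Fin n), L' ≤ n ∧ q' 0 = q 0 ∧ q' L' = q L ∧
            pcost v q' L' ≤ pcost v q L := by
        intro i j hij hjL hqij
        have hsp := splice_cost v q i j L hij hjL hqij
        have hcn := cyc_nonneg v hcyc q i j hij hqij
        have hlt : L - (j - i) < L := by omega
        obtain ⟨L', q', h1, h2, h3, h4⟩ := ih (L - (j - i)) hlt
          (fun t => if t ≤ i then q t else q (t + (j - i)))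
        refine ⟨L', q', h1, ?_, ?_, ?_⟩
        · rw [h2, if_pos (Nat.zero_le i)]
        · rw [h3]
          by_cases hLi : L - (j - i) ≤ i
          · rw [if_pos hLi]
            exact (congrArg q (by omega : L - (j - i) = i)).trans
              (hqij.trans (congrArg q (by omega)))
          · rw [if_neg hLi]
            exact congrArg q (by omega)
        · calc pcost v q' L' ≤ _ := h4
            _ ≤ pcost v q L := by linarith
      rcases hxy.lt_or_gt with h | h
      · exact key x y h (Nat.lt_succ_iff.mp y.isLt) hqxy
      · exact key y x h (Nat.lt_succ_iff.mp x.isLt) hqxy.symm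

/-- Cyclic monotonicity implies existence of a potential. -/
lemma exists_potential (v : Fin n → Fin n → ℝ)
    (hcyc : ∀ m : ℕ, 0 < m → ∀ ks : ℕ → Fin n,
      0 ≤ ∑ i ∈ Finset.range m, v (ks i) (ks ((i + 1) % m))) :
    ∃ c : Fin n → ℝ, ∀ j k : Fin n, c k ≤ v k j + c j := by
  rcases Nat.eq_zero_or_pos n with hn | hn
  · subst hn
    exact ⟨fun _ => 0, fun j => j.elim0⟩
  haveI : Nonempty (Fin n) := ⟨⟨0, hn⟩⟩
  set b : Fin n := ⟨0, hn⟩ with hb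
  set ext : (Fin (n + 1) → Fin n) → ℕ → Fin n :=
    fun p t => p ⟨min t n, by omega⟩ with hext
  set f : Fin n → (Fin (n + 1) × (Fin (n + 1) → Fin n)) → ℝ :=
    fun k Lp => if ext Lp.2 0 = k ∧ ext Lp.2 Lp.1 = b
      then pcost v (ext Lp.2) Lp.1 else v k b with hf
  set c : Fin n → ℝ := fun k => Finset.univ.inf' Finset.univ_nonempty (f k) with hc
  have UB : ∀ (k : Fin n) (q : ℕ → Fin n) (L : ℕ), L ≤ n → q 0 = k → q L = b →
      c k ≤ pcost v q L := by
    intro k q L hL h0 hE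
    set p : Fin (n + 1) → Fin n := fun s => q s with hp
    have h1 : ∀ t, t ≤ n → ext p t = q t := by
      intro t ht
      show q (min t n) = q t
      exact congrArg q (min_eq_left ht)
    have h2 : f k (⟨L, by omega⟩, p) = pcost v q L := by
      show (if ext p 0 = k ∧ ext p ((⟨L, _⟩ : Fin (n+1)) : ℕ) = b
        then pcost v (ext p) ((⟨L, _⟩ : Fin (n+1)) : ℕ) else v k b) = pcost v q L
      rw [if_pos ⟨(h1 0 (by omega)).trans h0, (h1 L (by omega)).trans hE⟩]
      show pcost v (ext p) L = pcost v q L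
      exact Finset.sum_congr rfl fun t ht => by
        rw [Finset.mem_range] at ht
        rw [h1 t (by omega), h1 (t + 1) (by omega)]
    calc c k ≤ f k (⟨L, by omega⟩, p) := Finset.inf'_le _ (Finset.mem_univ _)
      _ = pcost v q L := h2
  have EX : ∀ k : Fin n, ∃ (q : ℕ → Fin n) (L : ℕ), L ≤ n ∧ q 0 = k ∧ q L = b ∧
      pcost v q L ≤ c k := by
    intro k
    obtain ⟨t, -, ht⟩ := Finset.exists_mem_eq_inf' (Finset.univ_nonempty) (f k)
    have hck : c k = f k t := ht
    by_cases hcond : ext t.2 0 = k ∧ ext t.2 (t.1 : ℕ) = b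
    · refine ⟨ext t.2, t.1, Nat.lt_succ_iff.mp t.1.isLt, hcond.1, hcond.2, ?_⟩
      have : f k t = pcost v (ext t.2) (t.1 : ℕ) := by
        show (if _ then _ else _) = _
        rw [if_pos hcond]
      rw [hck, this]
    · have hfkt : f k t = v k b := by
        show (if _ then _ else _) = _
        rw [if_neg hcond]
      refine ⟨fun s => if s = 0 then k else b, 1, hn, by simp, by simp, ?_⟩
      have : pcost v (fun s => if s = 0 then k else b) 1 = v k b := by
        rw [pcost, Finset.sum_range_one]
        norm_num
      rw [this, hck, hfkt]
  refine ⟨c, fun j k => ?_⟩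
  obtain ⟨q, L, hL, h0, hE, hcost⟩ := EX j
  set q2 : ℕ → Fin n := fun t => if t = 0 then k else q (t - 1) with hq2
  have hcost2 : pcost v q2 (L + 1) = v k j + pcost v q L := by
    rw [pcost, Finset.sum_range_succ']
    have hA : ∀ i : ℕ, q2 (i + 1) = q i := by
      intro i
      show (if i + 1 = 0 then k else q (i + 1 - 1)) = q i
      rw [if_neg (Nat.succ_ne_zero i), Nat.add_sub_cancel]
    have hsum : (∑ i ∈ Finset.range L, v (q2 (i + 1)) (q2 (i + 1 + 1)))
        = ∑ i ∈ Finset.range L, v (q i) (q (i + 1)) :=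
      Finset.sum_congr rfl fun i _ => by rw [hA, hA]
    have h00 : q2 0 = k := by show (if (0:ℕ) = 0 then k else _) = k; rw [if_pos rfl]
    have h01 : q2 (0 + 1) = j := by rw [hA, h0]
    rw [hsum, h00, h01]
    show pcost v q L + v k j = v k j + pcost v q L
    ring
  obtain ⟨L', q', hL', h0', hE', hc'⟩ := shorten v hcyc (L + 1) q2
  have hq20 : q2 0 = k := by show (if (0:ℕ) = 0 then k else _) = k; rw [if_pos rfl]
  have hq2E : q2 (L + 1) = b := by
    show (if L + 1 = 0 then k else q (L + 1 - 1)) = b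
    rw [if_neg (Nat.succ_ne_zero L), Nat.add_sub_cancel, hE]
  have hub := UB k q' L' hL' (h0'.trans hq20) (hE'.trans hq2E)
  calc c k ≤ pcost v q' L' := hub
    _ ≤ pcost v q2 (L + 1) := hc'
    _ = v k j + pcost v q L := hcost2
    _ ≤ v k j + c j := by linarith

end Aux

theorem stmt8 {X A Y : Type*} [Fintype X] [Fintype A] [Fintype Y] [Nonempty A]
    (K : ℕ) (μ : X → ℝ) (hμ : IsPmf μ)
    (U : Fin K → X → A → ℝ) (α : Fin K → X → Y → ℝ) (hα : ∀ k, IsAttn (α k))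
    -- NIAC cyclical monotonicity
    (hNIAC : ∀ m : ℕ, 0 < m → ∀ ks : ℕ → Fin K,
      0 ≤ ∑ i ∈ Finset.range m,
        (Jval μ (α (ks i)) (U (ks i)) - Jval μ (α (ks ((i + 1) % m))) (U (ks i)))) :
    ∃ c : Fin K → ℝ, ∀ j k : Fin K,
      Jval μ (α j) (U k) - c j ≤ Jval μ (α k) (U k) - c k := by
  obtain ⟨c, hc⟩ := exists_potential
    (fun a b => Jval μ (α a) (U a) - Jval μ (α b) (U a)) hNIAC
  refine ⟨c, fun j k => ?_⟩
  have := hc j k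
  linarith
end

section
/- Consider finite sets X, A, Y, a prior pmf μ on X with μ(x) > 0 for all x, utilities U_k : X × A → ℝ and attention strategies α_k (k = 1,…,K). Then the BRP inequalities are feasible (there exist positive scalars c_k, λ_k with c_j − c_k − λ_k (J(α_j, U_k) − J(α_k, U_k)) ≥ 0 for all j, k) if and only if the dataset of attention strategies with constraint functions G_k(α) = J(α_k, U_k) − J(α, U_k) satisfies GARP: whenever there exist indices i_1,…,i_L with J(α_{i_1}, U_k) ≥ J(α_k, U_k), J(α_{i_2}, U_{i_1}) ≥ J(α_{i_1}, U_{i_1}), …, J(α_j, U_{i_L}) ≥ J(α_{i_L}, U_{i_L}), it follows that J(α_k, U_j) ≤ J(α_j, U_j). -/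
open Finset

section helpers

variable {K : ℕ}

lemma chain_to_rtg (R : Fin K → Fin K → Prop) (k j : Fin K) (L : ℕ)
    (i : Fin (L + 1) → Fin K) (h0 : R k (i 0))
    (hm : ∀ l : Fin L, R (i l.castSucc) (i l.succ))
    (hl : R (i (Fin.last L)) j) : Relation.ReflTransGen R k j := by
  have key : ∀ l : Fin (L + 1), Relation.ReflTransGen R (i 0) (i l) := by
    intro l
    induction l using Fin.induction with
    | zero => exact Relation.ReflTransGen.refl
    | succ m ih => exact ih.tail (hm m)
  exact (Relation.ReflTransGen.single h0).trans ((key (Fin.last L)).tail hl)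

lemma rtg_to_chain (R : Fin K → Fin K → Prop) (hrefl : ∀ k, R k k) (k j : Fin K)
    (h : Relation.ReflTransGen R k j) :
    ∃ (L : ℕ) (i : Fin (L + 1) → Fin K),
      R k (i 0) ∧ (∀ l : Fin L, R (i l.castSucc) (i l.succ)) ∧ R (i (Fin.last L)) j := by
  induction h with
  | refl => exact ⟨0, fun _ => k, hrefl k, fun l => l.elim0, hrefl k⟩
  | @tail b c hkb hbc ih =>
    obtain ⟨L, i, h0, hm, hl⟩ := ih
    refine ⟨L + 1, Fin.snoc i b, ?_, ?_, ?_⟩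
    · have h0' : (0 : Fin (L + 2)) = Fin.castSucc 0 := rfl
      rw [h0', Fin.snoc_castSucc]; exact h0
    · intro l
      induction l using Fin.lastCases with
      | last =>
        have h1 : (Fin.last L).succ = Fin.last (L + 1) := by
          ext; simp
        rw [Fin.snoc_castSucc, h1, Fin.snoc_last]
        exact hl
      | cast m =>
        have h1 : (m.castSucc : Fin (L+1)).succ = (m.succ).castSucc := by
          ext; simp
        rw [h1, Fin.snoc_castSucc, Fin.snoc_castSucc]
        exact hm m
    · rw [Fin.snoc_last]; exact hbc

lemma afriat (e : Fin K → Fin K → ℝ) (he : ∀ k, e k k = 0)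
    (garp : ∀ k j, Relation.ReflTransGen (fun a b => 0 ≤ e a b) k j → e j k ≤ 0) :
    ∃ c lam : Fin K → ℝ, (∀ k, 0 < c k) ∧ (∀ k, 0 < lam k) ∧
      ∀ j k, c j - c k - lam k * e k j ≥ 0 := by
  classical
  set R : Fin K → Fin K → Prop := fun a b => 0 ≤ e a b with hR
  set T : Fin K → Fin K → Prop := Relation.ReflTransGen R with hT
  have hTrefl : ∀ a, T a a := fun a => Relation.ReflTransGen.refl
  -- rank
  set r : Fin K → ℕ := fun k => (univ.filter (fun m => T m k)).card with hr
  have hmono : ∀ {a b}, T a b → r a ≤ r b := by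
    intro a b hab
    apply Finset.card_le_card
    intro m hm
    simp only [Finset.mem_filter, Finset.mem_univ, true_and] at *
    exact hm.trans hab
  have hstrict : ∀ {a b}, T a b → ¬ T b a → r a < r b := by
    intro a b hab hnba
    apply Finset.card_lt_card
    constructor
    · intro m hm
      simp only [Finset.mem_filter, Finset.mem_univ, true_and] at *
      exact hm.trans hab
    · intro hsub
      have := hsub (by simp [hTrefl b] : b ∈ univ.filter (fun m => T m b))
      simp only [Finset.mem_filter, Finset.mem_univ, true_and] at this
      exact hnba this
  -- epsilon
  set S : Finset (Fin K × Fin K) := univ.filter (fun p => e p.1 p.2 < 0) with hS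
  set ε : ℝ := if h : S.Nonempty then S.inf' h (fun p => -e p.1 p.2) else 1 with hε
  have hεpos : 0 < ε := by
    rw [hε]
    split_ifs with h
    · rw [Finset.lt_inf'_iff]
      intro p hp
      simp only [hS, Finset.mem_filter] at hp
      linarith [hp.2]
    · norm_num
  have hεle : ∀ a b, e a b < 0 → e a b ≤ -ε := by
    intro a b hab
    have hmem : (a, b) ∈ S := by simp [hS, hab]
    have hne : S.Nonempty := ⟨_, hmem⟩
    rw [hε, dif_pos hne]
    have := Finset.inf'_le (fun p => -e p.1 p.2) hmem
    linarith
  -- Emax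
  set Emax : ℝ := 1 + ∑ p : Fin K × Fin K, |e p.1 p.2| with hEdef
  have hEpos : 1 ≤ Emax := by
    rw [hEdef]
    have : (0:ℝ) ≤ ∑ p : Fin K × Fin K, |e p.1 p.2| :=
      Finset.sum_nonneg fun p _ => abs_nonneg _
    linarith
  have hEle : ∀ a b, e a b ≤ Emax := by
    intro a b
    have h1 : |e a b| ≤ ∑ p : Fin K × Fin K, |e p.1 p.2| :=
      Finset.single_le_sum (f := fun p : Fin K × Fin K => |e p.1 p.2|)
        (fun p _ => abs_nonneg _) (Finset.mem_univ (a, b))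
    have := le_abs_self (e a b)
    linarith
  -- M
  set M : ℝ := 1 + Emax / ε with hM
  have hM1 : 1 < M := by
    rw [hM]
    have : 0 < Emax / ε := div_pos (by linarith) hεpos
    linarith
  have hMpos : (0:ℝ) < M := by linarith
  refine ⟨fun k => M ^ (r k), fun k => M ^ (r k) / ε, fun k => pow_pos hMpos _,
    fun k => div_pos (pow_pos hMpos _) hεpos, ?_⟩
  intro j k
  dsimp only
  rcases lt_trichotomy (e k j) 0 with hneg | hzero | hpos
  · -- negative case
    have h1 : e k j ≤ -ε := hεle k j hneg
    have h2 : M ^ (r k) / ε * e k j ≤ M ^ (r k) / ε * (-ε) := by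
      apply mul_le_mul_of_nonneg_left h1
      positivity
    have h3 : M ^ (r k) / ε * (-ε) = -(M ^ (r k)) := by
      field_simp
    have h4 : (0:ℝ) < M ^ (r j) := pow_pos hMpos _
    rw [h3] at h2
    linarith
  · -- zero case
    have hT : T k j := Relation.ReflTransGen.single (by rw [hR]; simp [hzero])
    have h1 : M ^ (r k) ≤ M ^ (r j) := pow_le_pow_right₀ (le_of_lt hM1) (hmono hT)
    rw [hzero]
    simp only [mul_zero]
    linarith
  · -- positive case
    have hTkj : T k j := Relation.ReflTransGen.single (le_of_lt hpos)
    have hnTjk : ¬ T j k := by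
      intro hTjk
      have := garp j k hTjk
      linarith
    have hrlt : r k + 1 ≤ r j := hstrict hTkj hnTjk
    have h1 : M ^ (r k + 1) ≤ M ^ (r j) := pow_le_pow_right₀ (le_of_lt hM1) hrlt
    have h2 : M ^ (r k + 1) = M ^ (r k) * M := pow_succ M (r k)
    have h3 : M ^ (r k) / ε * e k j ≤ M ^ (r k) / ε * Emax := by
      apply mul_le_mul_of_nonneg_left (hEle k j)
      positivity
    have h4 : M ^ (r k) * M - M ^ (r k) = M ^ (r k) / ε * Emax := by
      rw [hM]; field_simp; ring
    have h6 : M ^ (r k) * M ≤ M ^ (r j) := h2 ▸ h1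
    have h7 : M ^ (r k) / ε * e k j ≤ M ^ (r j) - M ^ (r k) :=
      h3.trans (h4 ▸ (sub_le_sub_right h6 (M ^ (r k))))
    have h8 : 0 ≤ M ^ (r j) - M ^ (r k) - M ^ (r k) / ε * e k j := by
      rw [sub_sub]
      exact sub_nonneg.mpr (by linarith [h7])
    exact h8
end helpers

theorem stmt9 {X A Y : Type*} [Fintype X] [Fintype A] [Fintype Y] [Nonempty A]
    (K : ℕ) (μ : X → ℝ) (hμ : IsPmf μ) (hμpos : ∀ x, 0 < μ x)
    (U : Fin K → X → A → ℝ) (α : Fin K → X → Y → ℝ) (hα : ∀ k, IsAttn (α k)) :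
    -- BRP feasibility
    (∃ c lam : Fin K → ℝ, (∀ k, 0 < c k) ∧ (∀ k, 0 < lam k) ∧
      ∀ j k : Fin K,
        c j - c k - lam k * (Jval μ (α j) (U k) - Jval μ (α k) (U k)) ≥ 0)
    ↔
    -- GARP with constraint functions `G_k(α) = J(α_k, U_k) − J(α, U_k)`
    (∀ k j : Fin K, k ≠ j →
      (∃ (L : ℕ) (i : Fin (L + 1) → Fin K),
        Jval μ (α k) (U k) ≤ Jval μ (α (i 0)) (U k) ∧
        (∀ l : Fin L,
          Jval μ (α (i l.castSucc)) (U (i l.castSucc)) ≤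
            Jval μ (α (i l.succ)) (U (i l.castSucc))) ∧
        Jval μ (α (i (Fin.last L))) (U (i (Fin.last L))) ≤
          Jval μ (α j) (U (i (Fin.last L)))) →
      Jval μ (α k) (U j) ≤ Jval μ (α j) (U j)) := by
  set e : Fin K → Fin K → ℝ :=
    fun k j => Jval μ (α j) (U k) - Jval μ (α k) (U k) with hedef
  have he : ∀ k, e k k = 0 := fun k => sub_self _
  set R : Fin K → Fin K → Prop := fun a b => 0 ≤ e a b with hRdef
  constructor
  · rintro ⟨c, lam, hc, hlam, hineq⟩ k j hkj ⟨L, i, h0, hm, hl⟩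
    have hT : Relation.ReflTransGen R k j := by
      apply chain_to_rtg R k j L i
      · exact sub_nonneg.mpr h0
      · exact fun l => sub_nonneg.mpr (hm l)
      · exact sub_nonneg.mpr hl
    have hckj : c k ≤ c j := by
      clear hkj hl h0 hm i
      induction hT with
      | refl => exact le_rfl
      | @tail b b' hkb hbb' ih =>
        have h1 := hineq b' b
        have h2 : 0 ≤ lam b * e b b' := mul_nonneg (le_of_lt (hlam b)) hbb'
        have h3 : c b ≤ c b' := by
          simp only [hedef] at h1 h2
          nlinarith
        exact le_trans ih h3
    have h3 := hineq k j
    have h4 : e j k ≤ 0 := by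
      simp only [hedef] at h3 ⊢
      nlinarith [hlam j]
    exact sub_nonpos.mp h4
  · intro garp
    have garp' : ∀ k j, Relation.ReflTransGen R k j → e j k ≤ 0 := by
      intro k j hT
      by_cases hkj : k = j
      · subst hkj; rw [he]
      · obtain ⟨L, i, h0, hm, hl⟩ :=
          rtg_to_chain R (fun a => by simp [hRdef, he]) k j hT
        have hconc := garp k j hkj ⟨L, i, sub_nonneg.mp h0,
          fun l => sub_nonneg.mp (hm l), sub_nonneg.mp hl⟩
        exact sub_nonpos.mpr hconc
    exact afriat e he garp'
end

section
/- Let X, A, Y be finite sets, μ a pmf on X, and U : X × A → ℝ a utility function. If the attention strategy α Blackwell dominates the attention strategy α̂ (i.e., there exists a row-stochastic |Y| × |Y| matrix Q with α̂ = α Q), then J(α, U) ≥ J(α̂, U), where J(α, U) = Σ_{y ∈ Y} max_{a ∈ A} Σ_{x ∈ X} μ(x) α(y|x) U(x, a). -/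
open Finset

theorem stmt11 {X A Y : Type*} [Fintype X] [Fintype A] [Fintype Y] [Nonempty A]
    (μ : X → ℝ) (hμ : IsPmf μ) (U : X → A → ℝ)
    (α αhat : X → Y → ℝ) (hα : IsAttn α) (hαhat : IsAttn αhat)
    (hB : BlackwellGE α αhat) :
    Jval μ αhat U ≤ Jval μ α U := by
  obtain ⟨Q, ⟨hQ0, hQ1⟩, hQ⟩ := hB
  set f : Y → A → ℝ := fun y a => ∑ x, μ x * α x y * U x a with hf
  have key : ∀ y a, (∑ x, μ x * αhat x y * U x a) = ∑ y', Q y' y * f y' a := by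
    intro y a
    calc ∑ x, μ x * αhat x y * U x a
        = ∑ x, ∑ y', Q y' y * (μ x * α x y' * U x a) := by
          refine Finset.sum_congr rfl fun x _ => ?_
          rw [hQ x y, Finset.mul_sum, Finset.sum_mul]
          exact Finset.sum_congr rfl fun y' _ => by ring
      _ = ∑ y', Q y' y * f y' a := by
          rw [Finset.sum_comm]
          exact Finset.sum_congr rfl fun y' _ => by rw [hf, ← Finset.mul_sum]
  have step : ∀ y, Finset.univ.sup' Finset.univ_nonempty (fun a => ∑ x, μ x * αhat x y * U x a)
      ≤ ∑ y', Q y' y * Finset.univ.sup' Finset.univ_nonempty (f y') := by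
    intro y
    apply Finset.sup'_le
    intro a _
    rw [key y a]
    refine Finset.sum_le_sum fun y' _ => ?_
    exact mul_le_mul_of_nonneg_left (Finset.le_sup' (f y') (Finset.mem_univ a)) (hQ0 y' y)
  calc Jval μ αhat U ≤ ∑ y, ∑ y', Q y' y * Finset.univ.sup' Finset.univ_nonempty (f y') :=
        Finset.sum_le_sum fun y _ => step y
    _ = ∑ y', (∑ y, Q y' y) * Finset.univ.sup' Finset.univ_nonempty (f y') := by
        rw [Finset.sum_comm]
        exact Finset.sum_congr rfl fun y' _ => (Finset.sum_mul ..).symm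
    _ = Jval μ α U := by
        refine Finset.sum_congr rfl fun y' _ => ?_
        rw [hQ1 y', one_mul]
end

section
/- Consider finite sets X, A, Y, a prior pmf μ on X, utilities U_k : X × A → ℝ and attention strategies α_k (k = 1,…,K), and suppose positive scalars c_k, λ_k satisfy the BRP inequalities c_j − c_k − λ_k (J(α_j, U_k) − J(α_k, U_k)) ≥ 0 for all j, k. Let α_0 be the non-informative strategy α_0(y|x) = 1/|Y| for all x, y, and define the normalized cost C(α) = max_k { c_k + λ_k (J(α, U_k) − J(α_k, U_k)) } − C*, where C* = max_k { c_k + λ_k (J(α_0, U_k) − J(α_k, U_k)) }. Then: (i) C(α_0) = 0 (normalization); (ii) C(α_k) = c_k − C* for every k; and (iii) C rationalizes the dataset: for every k and every attention strategy α with C(α) ≤ C(α_k), one has J(α, U_k) ≤ J(α_k, U_k). -/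
open Finset

theorem stmt14 {X A Y : Type*} [Fintype X] [Fintype A] [Fintype Y] [Nonempty A] [Nonempty Y]
    (K : ℕ) (hK : 0 < K) (μ : X → ℝ) (hμ : IsPmf μ)
    (U : Fin K → X → A → ℝ) (α : Fin K → X → Y → ℝ) (hα : ∀ k, IsAttn (α k))
    (c lam : Fin K → ℝ) (hc : ∀ k, 0 < c k) (hlam : ∀ k, 0 < lam k)
    (hBRP : ∀ j k : Fin K,
      c j - c k - lam k * (Jval μ (α j) (U k) - Jval μ (α k) (U k)) ≥ 0)
    -- the non-informative strategy α₀(y|x) = 1/|Y|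
    (α₀ : X → Y → ℝ) (hα₀ : ∀ x y, α₀ x y = 1 / (Fintype.card Y : ℝ))
    (Cstar : ℝ)
    (hCstar : Cstar = Finset.univ.sup' (Finset.univ_nonempty_iff.mpr ⟨⟨0, hK⟩⟩)
        (fun k => c k + lam k * (Jval μ α₀ (U k) - Jval μ (α k) (U k))))
    (C : (X → Y → ℝ) → ℝ)
    (hCdef : ∀ a : X → Y → ℝ,
      C a = Finset.univ.sup' (Finset.univ_nonempty_iff.mpr ⟨⟨0, hK⟩⟩)
        (fun k => c k + lam k * (Jval μ a (U k) - Jval μ (α k) (U k))) - Cstar) :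
    -- (i) normalization, (ii) C(α_k) = c_k − C*, (iii) rationalization
    C α₀ = 0 ∧
    (∀ k, C (α k) = c k - Cstar) ∧
    (∀ k, ∀ a : X → Y → ℝ, IsAttn a → C a ≤ C (α k) →
      Jval μ a (U k) ≤ Jval μ (α k) (U k)) := by
  have hsup : ∀ b : X → Y → ℝ, ∀ k : Fin K,
      c k + lam k * (Jval μ b (U k) - Jval μ (α k) (U k)) ≤
      Finset.univ.sup' (Finset.univ_nonempty_iff.mpr ⟨⟨0, hK⟩⟩)
        (fun j => c j + lam j * (Jval μ b (U j) - Jval μ (α j) (U j))) := by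
    intro b k
    exact Finset.le_sup' (fun j => c j + lam j * (Jval μ b (U j) - Jval μ (α j) (U j))) (Finset.mem_univ k)
  refine ⟨by rw [hCdef, hCstar]; ring, ?_, ?_⟩
  · intro k
    rw [hCdef]
    have heq : Finset.univ.sup' (Finset.univ_nonempty_iff.mpr ⟨⟨0, hK⟩⟩)
        (fun j => c j + lam j * (Jval μ (α k) (U j) - Jval μ (α j) (U j))) = c k := by
      apply le_antisymm
      · apply Finset.sup'_le
        intro j _
        have := hBRP k j
        linarith
      · have := hsup (α k) k
        have h0 : Jval μ (α k) (U k) - Jval μ (α k) (U k) = 0 := by ring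
        rw [h0] at this
        linarith
    rw [heq]
  · intro k a _ hle
    rw [hCdef a, hCdef (α k)] at hle
    have h2 : Finset.univ.sup' (Finset.univ_nonempty_iff.mpr ⟨⟨0, hK⟩⟩)
        (fun j => c j + lam j * (Jval μ (α k) (U j) - Jval μ (α j) (U j))) ≤ c k := by
      apply Finset.sup'_le
      intro j _
      have := hBRP k j
      linarith
    have h1 := hsup a k
    have hl := hlam k
    nlinarith
end

section
/- Consider finite sets X, A, Y, a prior pmf μ on X, utilities U_k : X × A → ℝ and attention strategies α_k (k = 1,…,K). Then the following are equivalent: (i) there exists a Blackwell-monotone function C from the set of attention strategies to ℝ and positive scalars λ_1,…,λ_K such that for every k, α_k maximizes λ_k J(α, U_k) − C(α) over all attention strategies α; (ii) there exist positive scalars c_k, λ_k with c_j − c_k − λ_k (J(α_j, U_k) − J(α_k, U_k)) ≥ 0 for all j, k; (iii) there exists a Blackwell-monotone, convex function C with C(α_0) = 0 at the non-informative strategy α_0(y|x) = 1/|Y|, and positive scalars λ_1,…,λ_K, such that for every k, α_k maximizes λ_k J(α, U_k) − C(α) over all attention strategies α. -/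
open Finset

lemma Jval_mono {X A Y : Type*} [Fintype X] [Fintype A] [Fintype Y] [Nonempty A] [Nonempty Y]
    (μ : X → ℝ) (U : X → A → ℝ) (a ahat : X → Y → ℝ) (h : BlackwellGE a ahat) :
    Jval μ ahat U ≤ Jval μ a U := by
  obtain ⟨Q, ⟨hQ0, hQ1⟩, hEq⟩ := h
  have key : ∀ y, (Finset.univ.sup' Finset.univ_nonempty fun b => ∑ x, μ x * ahat x y * U x b)
      ≤ ∑ y', Q y' y * Finset.univ.sup' Finset.univ_nonempty (fun b => ∑ x, μ x * a x y' * U x b) := by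
    intro y
    apply Finset.sup'_le
    intro b _
    have h1 : ∑ x, μ x * ahat x y * U x b
        = ∑ y', Q y' y * ∑ x, μ x * a x y' * U x b := by
      calc ∑ x, μ x * ahat x y * U x b
          = ∑ x, ∑ y', Q y' y * (μ x * a x y' * U x b) := by
            refine Finset.sum_congr rfl fun x _ => ?_
            rw [hEq x y, Finset.mul_sum, Finset.sum_mul]
            exact Finset.sum_congr rfl fun y' _ => by ring
        _ = ∑ y', Q y' y * ∑ x, μ x * a x y' * U x b := by
            rw [Finset.sum_comm]
            exact Finset.sum_congr rfl fun y' _ => by rw [Finset.mul_sum]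
    rw [h1]
    exact Finset.sum_le_sum fun y' _ =>
      mul_le_mul_of_nonneg_left
        (Finset.le_sup' (fun b => ∑ x, μ x * a x y' * U x b) (Finset.mem_univ b)) (hQ0 y' y)
  calc Jval μ ahat U
      ≤ ∑ y, ∑ y', Q y' y * Finset.univ.sup' Finset.univ_nonempty (fun b => ∑ x, μ x * a x y' * U x b) :=
        Finset.sum_le_sum fun y _ => key y
    _ = ∑ y', (∑ y, Q y' y) * Finset.univ.sup' Finset.univ_nonempty (fun b => ∑ x, μ x * a x y' * U x b) := by
        rw [Finset.sum_comm]
        exact Finset.sum_congr rfl fun y' _ => by rw [Finset.sum_mul]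
    _ = Jval μ a U := by
        refine Finset.sum_congr rfl fun y' _ => ?_
        rw [hQ1 y', one_mul]

lemma Jval_convex {X A Y : Type*} [Fintype X] [Fintype A] [Fintype Y] [Nonempty A] [Nonempty Y]
    (μ : X → ℝ) (U : X → A → ℝ) (η ψ : X → Y → ℝ) (θ : ℝ) (h0 : 0 ≤ θ) (h1 : θ ≤ 1) :
    Jval μ (fun x y => θ * η x y + (1 - θ) * ψ x y) U ≤ θ * Jval μ η U + (1 - θ) * Jval μ ψ U := by
  have h1' : 0 ≤ 1 - θ := by linarith
  unfold Jval
  rw [Finset.mul_sum, Finset.mul_sum, ← Finset.sum_add_distrib]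
  refine Finset.sum_le_sum fun y _ => ?_
  apply Finset.sup'_le
  intro b _
  have he : ∑ x, μ x * (θ * η x y + (1 - θ) * ψ x y) * U x b
      = θ * ∑ x, μ x * η x y * U x b + (1 - θ) * ∑ x, μ x * ψ x y * U x b := by
    rw [Finset.mul_sum, Finset.mul_sum, ← Finset.sum_add_distrib]
    exact Finset.sum_congr rfl fun x _ => by ring
  rw [he]
  exact add_le_add
    (mul_le_mul_of_nonneg_left (Finset.le_sup' (fun a => ∑ x, μ x * η x y * U x a) (Finset.mem_univ b)) h0)
    (mul_le_mul_of_nonneg_left (Finset.le_sup' (fun a => ∑ x, μ x * ψ x y * U x a) (Finset.mem_univ b)) h1')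

lemma blackwell_to_unif {X Y : Type*} [Fintype Y] [Nonempty Y]
    (a : X → Y → ℝ) (ha : IsAttn a) :
    BlackwellGE a (fun _ _ => 1 / (Fintype.card Y : ℝ)) := by
  have hc : (0:ℝ) < (Fintype.card Y : ℝ) := by
    exact Nat.cast_pos.mpr (Fintype.card_pos (α := Y))
  refine ⟨fun _ _ => 1 / (Fintype.card Y : ℝ), ⟨fun _ _ => by positivity, fun y => ?_⟩, fun x y => ?_⟩
  · rw [Finset.sum_const, Finset.card_univ, nsmul_eq_mul]
    field_simp
  · rw [← Finset.sum_mul, ha.2 x, one_mul]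

lemma Jval_unif_le {X A Y : Type*} [Fintype X] [Fintype A] [Fintype Y] [Nonempty A] [Nonempty Y]
    (μ : X → ℝ) (U : X → A → ℝ) (a : X → Y → ℝ) (ha : IsAttn a) :
    Jval μ (fun (_ : X) (_ : Y) => 1 / (Fintype.card Y : ℝ)) U ≤ Jval μ a U :=
  by exact Jval_mono μ U a (fun _ _ => 1 / (Fintype.card Y : ℝ)) (blackwell_to_unif (X := X) (Y := Y) a ha)

section Main
variable {X A Y : Type*} [Fintype X] [Fintype A] [Fintype Y] [Nonempty A] [Nonempty Y]
  {K : ℕ} (μ : X → ℝ) (U : Fin K → X → A → ℝ) (α : Fin K → X → Y → ℝ)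

lemma aux_i_to_ii (hα : ∀ k, IsAttn (α k))
    (h : ∃ (C : (X → Y → ℝ) → ℝ) (lam : Fin K → ℝ),
        (∀ a ahat : X → Y → ℝ, IsAttn a → IsAttn ahat → BlackwellGE a ahat →
          C ahat ≤ C a) ∧
        (∀ k, 0 < lam k) ∧
        (∀ k, ∀ a : X → Y → ℝ, IsAttn a →
          lam k * Jval μ a (U k) - C a ≤ lam k * Jval μ (α k) (U k) - C (α k))) :
    ∃ c lam : Fin K → ℝ, (∀ k, 0 < c k) ∧ (∀ k, 0 < lam k) ∧
        ∀ j k : Fin K,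
          c j - c k - lam k * (Jval μ (α j) (U k) - Jval μ (α k) (U k)) ≥ 0 := by
  obtain ⟨C, lam, _, hpos, hopt⟩ := h
  refine ⟨fun k => C (α k) + 1 + ∑ j, |C (α j)|, lam, fun k => ?_, hpos, fun j k => ?_⟩
  · have h1 : |C (α k)| ≤ ∑ j, |C (α j)| :=
      Finset.single_le_sum (f := fun j => |C (α j)|) (fun j _ => abs_nonneg _) (Finset.mem_univ k)
    have h2 := neg_abs_le (C (α k))
    dsimp only
    linarith
  · have h1 := hopt k (α j) (hα j)
    have h2 : lam k * (Jval μ (α j) (U k) - Jval μ (α k) (U k))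
        = lam k * Jval μ (α j) (U k) - lam k * Jval μ (α k) (U k) := by ring
    dsimp only
    linarith

lemma aux_iii_to_i
    (h : ∃ (C : (X → Y → ℝ) → ℝ) (lam : Fin K → ℝ),
        (∀ a ahat : X → Y → ℝ, IsAttn a → IsAttn ahat → BlackwellGE a ahat →
          C ahat ≤ C a) ∧
        (∀ η ψ : X → Y → ℝ, IsAttn η → IsAttn ψ → ∀ θ : ℝ, 0 ≤ θ → θ ≤ 1 →
          C (fun x y => θ * η x y + (1 - θ) * ψ x y) ≤ θ * C η + (1 - θ) * C ψ) ∧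
        C (fun _ _ => 1 / (Fintype.card Y : ℝ)) = 0 ∧
        (∀ k, 0 < lam k) ∧
        (∀ k, ∀ a : X → Y → ℝ, IsAttn a →
          lam k * Jval μ a (U k) - C a ≤ lam k * Jval μ (α k) (U k) - C (α k))) :
    ∃ (C : (X → Y → ℝ) → ℝ) (lam : Fin K → ℝ),
        (∀ a ahat : X → Y → ℝ, IsAttn a → IsAttn ahat → BlackwellGE a ahat →
          C ahat ≤ C a) ∧
        (∀ k, 0 < lam k) ∧
        (∀ k, ∀ a : X → Y → ℝ, IsAttn a →
          lam k * Jval μ a (U k) - C a ≤ lam k * Jval μ (α k) (U k) - C (α k)) := by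
  obtain ⟨C, lam, hmono, _, _, hpos, hopt⟩ := h
  exact ⟨C, lam, hmono, hpos, hopt⟩

lemma aux_ii_to_iii (hα : ∀ k, IsAttn (α k))
    (h : ∃ c lam : Fin K → ℝ, (∀ k, 0 < c k) ∧ (∀ k, 0 < lam k) ∧
        ∀ j k : Fin K,
          c j - c k - lam k * (Jval μ (α j) (U k) - Jval μ (α k) (U k)) ≥ 0) :
    ∃ (C : (X → Y → ℝ) → ℝ) (lam : Fin K → ℝ),
        (∀ a ahat : X → Y → ℝ, IsAttn a → IsAttn ahat → BlackwellGE a ahat →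
          C ahat ≤ C a) ∧
        (∀ η ψ : X → Y → ℝ, IsAttn η → IsAttn ψ → ∀ θ : ℝ, 0 ≤ θ → θ ≤ 1 →
          C (fun x y => θ * η x y + (1 - θ) * ψ x y) ≤ θ * C η + (1 - θ) * C ψ) ∧
        C (fun _ _ => 1 / (Fintype.card Y : ℝ)) = 0 ∧
        (∀ k, 0 < lam k) ∧
        (∀ k, ∀ a : X → Y → ℝ, IsAttn a →
          lam k * Jval μ a (U k) - C a ≤ lam k * Jval μ (α k) (U k) - C (α k)) := by
  obtain ⟨c, lam, hc, hlam, hcyc⟩ := h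
  rcases Nat.eq_zero_or_pos K with hK | hK
  · subst hK
    refine ⟨fun _ => 0, fun _ => 1, fun _ _ _ _ _ => le_refl 0,
      fun η ψ _ _ θ h0 h1 => by nlinarith, rfl, fun k => one_pos, fun k => k.elim0⟩
  · haveI : Nonempty (Fin K) := ⟨⟨0, hK⟩⟩
    set α0 : X → Y → ℝ := fun _ _ => 1 / (Fintype.card Y : ℝ) with hα0
    set s : ℝ := Finset.univ.inf' Finset.univ_nonempty c with hs
    have hsle : ∀ j : Fin K, s ≤ c j := fun j => Finset.inf'_le c (Finset.mem_univ j)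
    have hles : ∀ k : Fin K,
        c k - lam k * (Jval μ (α k) (U k) - Jval μ α0 (U k)) ≤ s := by
      intro k
      apply Finset.le_inf'
      intro j _
      have h1 := hcyc j k
      have h2 : Jval μ α0 (U k) ≤ Jval μ (α j) (U k) := Jval_unif_le μ (U k) (α j) (hα j)
      have h3 : lam k * Jval μ α0 (U k) ≤ lam k * Jval μ (α j) (U k) :=
        mul_le_mul_of_nonneg_left h2 (le_of_lt (hlam k))
      have h4 : lam k * (Jval μ (α j) (U k) - Jval μ (α k) (U k))
          = lam k * Jval μ (α j) (U k) - lam k * Jval μ (α k) (U k) := by ring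
      have h5 : lam k * (Jval μ (α k) (U k) - Jval μ α0 (U k))
          = lam k * Jval μ (α k) (U k) - lam k * Jval μ α0 (U k) := by ring
      linarith
    -- the cost function
    set T : (X → Y → ℝ) → Fin K → ℝ :=
      fun a k => lam k * Jval μ a (U k) + (c k - lam k * Jval μ (α k) (U k)) - s with hT
    set C : (X → Y → ℝ) → ℝ :=
      fun a => Finset.univ.sup' Finset.univ_nonempty
        (fun o : Option (Fin K) => o.elim 0 (T a)) with hC
    have hC0 : ∀ a, 0 ≤ C a := fun a =>
      Finset.le_sup' (fun o : Option (Fin K) => o.elim 0 (T a)) (Finset.mem_univ none)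
    have hCT : ∀ a k, T a k ≤ C a := fun a k =>
      Finset.le_sup' (fun o : Option (Fin K) => o.elim 0 (T a)) (Finset.mem_univ (some k))
    have hCαk : ∀ k : Fin K, C (α k) ≤ c k - s := by
      intro k
      apply Finset.sup'_le
      rintro (_ | j) _
      · simpa using sub_nonneg.mpr (hsle k)
      · show T (α k) j ≤ c k - s
        have h1 := hcyc k j
        have h4 : lam j * (Jval μ (α k) (U j) - Jval μ (α j) (U j))
            = lam j * Jval μ (α k) (U j) - lam j * Jval μ (α j) (U j) := by ring
        simp only [hT]
        linarith
    refine ⟨C, lam, ?_, ?_, ?_, hlam, ?_⟩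
    · -- Blackwell monotone
      intro a ahat _ _ hB
      apply Finset.sup'_le
      rintro (_ | k) _
      · exact hC0 a
      · refine le_trans ?_ (hCT a k)
        show T ahat k ≤ T a k
        have := mul_le_mul_of_nonneg_left (Jval_mono μ (U k) a ahat hB) (le_of_lt (hlam k))
        simp only [hT]
        linarith
    · -- convexity
      intro η ψ _ _ θ h0 h1
      have h1' : 0 ≤ 1 - θ := by linarith
      apply Finset.sup'_le
      rintro (_ | k) _
      · show (0:ℝ) ≤ θ * C η + (1 - θ) * C ψ
        have := mul_nonneg h0 (hC0 η)
        have := mul_nonneg h1' (hC0 ψ)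
        linarith
      · show T (fun x y => θ * η x y + (1 - θ) * ψ x y) k ≤ θ * C η + (1 - θ) * C ψ
        have hJ := Jval_convex μ (U k) η ψ θ h0 h1
        have h2 := mul_le_mul_of_nonneg_left hJ (le_of_lt (hlam k))
        have h3 := mul_le_mul_of_nonneg_left (hCT η k) h0
        have h4 := mul_le_mul_of_nonneg_left (hCT ψ k) h1'
        have e1 : lam k * (θ * Jval μ η (U k) + (1 - θ) * Jval μ ψ (U k))
              + (c k - lam k * Jval μ (α k) (U k)) - s
            = θ * T η k + (1 - θ) * T ψ k := by
          simp only [hT]; ring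
        simp only [hT] at h3 h4 ⊢
        nlinarith [h2, h3, h4]
    · -- C α0 = 0
      apply le_antisymm
      · apply Finset.sup'_le
        rintro (_ | k) _
        · exact le_refl 0
        · show T α0 k ≤ 0
          have := hles k
          have h5 : lam k * (Jval μ (α k) (U k) - Jval μ α0 (U k))
              = lam k * Jval μ (α k) (U k) - lam k * Jval μ α0 (U k) := by ring
          simp only [hT]
          linarith
      · exact hC0 α0
    · -- optimality
      intro k a ha
      have h1 := hCT a k
      have h2 := hCαk k
      simp only [hT] at h1
      linarith

end Main

theorem stmt17 {X A Y : Type*} [Fintype X] [Fintype A] [Fintype Y] [Nonempty A] [Nonempty Y]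
    (K : ℕ) (μ : X → ℝ) (hμ : IsPmf μ)
    (U : Fin K → X → A → ℝ) (α : Fin K → X → Y → ℝ) (hα : ∀ k, IsAttn (α k)) :
    -- (i) ↔ (ii)
    ((∃ (C : (X → Y → ℝ) → ℝ) (lam : Fin K → ℝ),
        (∀ a ahat : X → Y → ℝ, IsAttn a → IsAttn ahat → BlackwellGE a ahat →
          C ahat ≤ C a) ∧
        (∀ k, 0 < lam k) ∧
        (∀ k, ∀ a : X → Y → ℝ, IsAttn a →
          lam k * Jval μ a (U k) - C a ≤ lam k * Jval μ (α k) (U k) - C (α k)))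
      ↔
      (∃ c lam : Fin K → ℝ, (∀ k, 0 < c k) ∧ (∀ k, 0 < lam k) ∧
        ∀ j k : Fin K,
          c j - c k - lam k * (Jval μ (α j) (U k) - Jval μ (α k) (U k)) ≥ 0))
    ∧
    -- (ii) ↔ (iii)
    ((∃ c lam : Fin K → ℝ, (∀ k, 0 < c k) ∧ (∀ k, 0 < lam k) ∧
        ∀ j k : Fin K,
          c j - c k - lam k * (Jval μ (α j) (U k) - Jval μ (α k) (U k)) ≥ 0)
      ↔
      (∃ (C : (X → Y → ℝ) → ℝ) (lam : Fin K → ℝ),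
        (∀ a ahat : X → Y → ℝ, IsAttn a → IsAttn ahat → BlackwellGE a ahat →
          C ahat ≤ C a) ∧
        (∀ η ψ : X → Y → ℝ, IsAttn η → IsAttn ψ → ∀ θ : ℝ, 0 ≤ θ → θ ≤ 1 →
          C (fun x y => θ * η x y + (1 - θ) * ψ x y) ≤ θ * C η + (1 - θ) * C ψ) ∧
        C (fun _ _ => 1 / (Fintype.card Y : ℝ)) = 0 ∧
        (∀ k, 0 < lam k) ∧
        (∀ k, ∀ a : X → Y → ℝ, IsAttn a →
          lam k * Jval μ a (U k) - C a ≤ lam k * Jval μ (α k) (U k) - C (α k)))) := by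
  refine ⟨⟨fun h => aux_i_to_ii μ U α hα h,
           fun h => aux_iii_to_i μ U α (aux_ii_to_iii μ U α hα h)⟩,
          ⟨fun h => aux_ii_to_iii μ U α hα h,
           fun h => aux_i_to_ii μ U α hα (aux_iii_to_i μ U α h)⟩⟩
end
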